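/- In the Haugazeau iteration, if additionally every weak sequential cluster point of (xₙ) lies in C, then xₙ converges strongly to P_C x₀, the projection of x₀ onto C. -/

import Mathlib

open scoped InnerProductSpace
open Filter Topology

/-- The half-space through `y` with outer normal `x - y`. -/
def haugH {E : Type*} [NormedAddCommGroup E] [InnerProductSpace ℝ E] (x y : E) : Set E :=
  {h : E | ⟪h - y, x - y⟫_ℝ ≤ 0}

section Aux

variable {E : Type*} [NormedAddCommGroup E] [InnerProductSpace ℝ E]

lemma haugH_convex (x y : E) : Convex ℝ (haugH x y) := by
  have h : haugH x y = {h : E | ⟪h, x - y⟫_ℝ ≤ ⟪y, x - y⟫_ℝ} := by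
    ext h
    simp [haugH, inner_sub_left, sub_nonpos]
  rw [h]
  intro p hp p' hp' a b ha hb hab
  simp only [Set.mem_setOf_eq] at *
  have hsplit : ⟪a • p + b • p', x - y⟫_ℝ = a * ⟪p, x - y⟫_ℝ + b * ⟪p', x - y⟫_ℝ := by
    rw [inner_add_left, real_inner_smul_left, real_inner_smul_left]
  rw [hsplit]
  have hy : a * ⟪y, x - y⟫_ℝ + b * ⟪y, x - y⟫_ℝ = ⟪y, x - y⟫_ℝ := by
    rw [← add_mul, hab, one_mul]
  linarith [mul_le_mul_of_nonneg_left hp ha, mul_le_mul_of_nonneg_left hp' hb]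

lemma haug_key (a b c : E) (h : ⟪b - c, a - c⟫_ℝ ≤ 0) :
    ‖a - c‖ ^ 2 + ‖b - c‖ ^ 2 ≤ ‖a - b‖ ^ 2 := by
  have hab : a - b = (a - c) - (b - c) := by abel
  have hn := norm_sub_sq_real (a - c) (b - c)
  have hcomm := real_inner_comm (a - c) (b - c)
  rw [hab]
  linarith [h, hn, hcomm]

/-- Bounded sequences in a Hilbert space admit weakly convergent subsequences. -/
lemma exists_weak_subseq [CompleteSpace E] (x : ℕ → E) (B : ℝ) (hB : ∀ n, ‖x n‖ ≤ B) :
    ∃ (q : ℕ → ℕ) (w : E), StrictMono q ∧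
      ∀ u : E, Tendsto (fun n => ⟪x (q n), u⟫_ℝ) atTop (𝓝 ⟪w, u⟫_ℝ) := by
  classical
  have hB0 : 0 ≤ B := le_trans (norm_nonneg _) (hB 0)
  set M : Submodule ℝ E := (Submodule.span ℝ (Set.range x)).topologicalClosure with hM
  haveI : CompleteSpace M := (Submodule.isClosed_topologicalClosure _).completeSpace_coe
  have hxM : ∀ n, x n ∈ M := fun n =>
    Submodule.le_topologicalClosure _ (Submodule.subset_span ⟨n, rfl⟩)
  have hsep : TopologicalSpace.IsSeparable (M : Set E) := by
    have h1 : TopologicalSpace.IsSeparable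
        (closure (Submodule.span ℝ (Set.range x) : Set E)) :=
      ((Set.countable_range x).isSeparable.span).closure
    simpa [hM, Submodule.topologicalClosure_coe] using h1
  obtain ⟨c, hc_count, hc_sub⟩ := hsep
  obtain ⟨e, he⟩ := (hc_count.insert 0).exists_eq_range (Set.insert_nonempty _ _)
  have hMe : (M : Set E) ⊆ closure (Set.range e) :=
    hc_sub.trans (closure_mono (by rw [← he]; exact Set.subset_insert _ _))
  set f : ℕ → ℕ → ℝ := fun n k => ⟪x n, e k⟫_ℝ with hf_def
  have hf : ∀ n, f n ∈ Set.pi Set.univ (fun k => Set.Icc (-(B * ‖e k‖)) (B * ‖e k‖)) := by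
    intro n k _
    have h1 : |⟪x n, e k⟫_ℝ| ≤ ‖x n‖ * ‖e k‖ := abs_real_inner_le_norm _ _
    have h2 : ‖x n‖ * ‖e k‖ ≤ B * ‖e k‖ :=
      mul_le_mul_of_nonneg_right (hB n) (norm_nonneg _)
    have h3 := abs_le.mp h1
    exact ⟨by dsimp [f]; linarith [h3.1], by dsimp [f]; linarith [h3.2]⟩
  have hcomp : IsCompact (Set.pi Set.univ fun k => Set.Icc (-(B * ‖e k‖)) (B * ‖e k‖)) :=
    isCompact_univ_pi fun k => isCompact_Icc
  obtain ⟨g, _, q, hq, hfq⟩ := hcomp.tendsto_subseq hf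
  have hk : ∀ k, Tendsto (fun n => ⟪x (q n), e k⟫_ℝ) atTop (𝓝 (g k)) := by
    intro k
    exact tendsto_pi_nhds.mp hfq k
  have hconv : ∀ u : E, ∃ l, Tendsto (fun n => ⟪x (q n), u⟫_ℝ) atTop (𝓝 l) := by
    intro u
    set v : E := (M.orthogonalProjectionOnto u : E) with hv
    have hvu : ∀ n, ⟪x n, u⟫_ℝ = ⟪x n, v⟫_ℝ := by
      intro n
      have horth : u - v ∈ Mᗮ := M.sub_starProjection_mem_orthogonal u
      have h0 : ⟪x n, u - v⟫_ℝ = 0 :=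
        (Submodule.mem_orthogonal M (u - v)).mp horth (x n) (hxM n)
      rw [inner_sub_right] at h0
      linarith
    have hvM : v ∈ closure (Set.range e) := hMe (M.orthogonalProjectionOnto u).2
    have hC : CauchySeq (fun n => ⟪x (q n), v⟫_ℝ) := by
      rw [Metric.cauchySeq_iff]
      intro ε hε
      have hε4 : 0 < ε / (4 * (B + 1)) := by positivity
      obtain ⟨z, hzmem, hz⟩ := Metric.mem_closure_iff.mp hvM (ε / (4 * (B + 1))) hε4
      obtain ⟨k, rfl⟩ := hzmem
      have hcau : CauchySeq (fun n => ⟪x (q n), e k⟫_ℝ) := (hk k).cauchySeq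
      rw [Metric.cauchySeq_iff] at hcau
      obtain ⟨N, hN⟩ := hcau (ε / 2) (by positivity)
      refine ⟨N, fun m hm n hn => ?_⟩
      have hdiff : ∀ a b : ℕ,
          ⟪x a, v⟫_ℝ - ⟪x b, v⟫_ℝ - (⟪x a, e k⟫_ℝ - ⟪x b, e k⟫_ℝ)
            = ⟪x a - x b, v - e k⟫_ℝ := by
        intro a b
        rw [inner_sub_left, inner_sub_right, inner_sub_right]
        ring
      have hbd : |⟪x (q m) - x (q n), v - e k⟫_ℝ| ≤ (2 * B) * (ε / (4 * (B + 1))) := by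
        have h1 : |⟪x (q m) - x (q n), v - e k⟫_ℝ| ≤ ‖x (q m) - x (q n)‖ * ‖v - e k‖ :=
          abs_real_inner_le_norm _ _
        have h2 : ‖x (q m) - x (q n)‖ ≤ 2 * B := by
          calc ‖x (q m) - x (q n)‖ ≤ ‖x (q m)‖ + ‖x (q n)‖ := norm_sub_le _ _
            _ ≤ 2 * B := by linarith [hB (q m), hB (q n)]
        have h3 : ‖v - e k‖ ≤ ε / (4 * (B + 1)) := by
          rw [← dist_eq_norm]
          exact le_of_lt hz
        calc |⟪x (q m) - x (q n), v - e k⟫_ℝ| ≤ ‖x (q m) - x (q n)‖ * ‖v - e k‖ := h1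
          _ ≤ (2 * B) * (ε / (4 * (B + 1))) := by
              apply mul_le_mul h2 h3 (norm_nonneg _) (by linarith)
      have hNk := hN m hm n hn
      rw [Real.dist_eq] at hNk ⊢
      have heq := hdiff (q m) (q n)
      have h2B : (2 * B) * (ε / (4 * (B + 1))) ≤ ε / 2 := by
        have he : (2 * B) * (ε / (4 * (B + 1))) = 2 * B * ε / (4 * (B + 1)) := by ring
        rw [he, div_le_div_iff₀ (by positivity) (by norm_num)]
        nlinarith [hε, hB0]
      have habs : |⟪x (q m), v⟫_ℝ - ⟪x (q n), v⟫_ℝ|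
          ≤ |⟪x (q m), e k⟫_ℝ - ⟪x (q n), e k⟫_ℝ| + |⟪x (q m) - x (q n), v - e k⟫_ℝ| := by
        have hsum : ⟪x (q m), v⟫_ℝ - ⟪x (q n), v⟫_ℝ
            = (⟪x (q m), e k⟫_ℝ - ⟪x (q n), e k⟫_ℝ) + ⟪x (q m) - x (q n), v - e k⟫_ℝ := by
          rw [← heq]; ring
        rw [hsum]
        exact abs_add_le _ _
      calc |⟪x (q m), v⟫_ℝ - ⟪x (q n), v⟫_ℝ|
          ≤ |⟪x (q m), e k⟫_ℝ - ⟪x (q n), e k⟫_ℝ| + |⟪x (q m) - x (q n), v - e k⟫_ℝ| := habs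
        _ < ε / 2 + ε / 2 := by
            apply add_lt_add_of_lt_of_le hNk (hbd.trans h2B)
        _ = ε := by ring
    obtain ⟨l, hl⟩ := cauchySeq_tendsto_of_complete hC
    refine ⟨l, ?_⟩
    have : (fun n => ⟪x (q n), u⟫_ℝ) = fun n => ⟪x (q n), v⟫_ℝ := funext fun n => hvu (q n)
    rw [this]
    exact hl
  choose l hl using hconv
  have ladd : ∀ u v' : E, l (u + v') = l u + l v' := fun u v' =>
    tendsto_nhds_unique (hl (u + v'))
      (by simpa [inner_add_right] using (hl u).add (hl v'))
  have lsmul : ∀ (r : ℝ) (u : E), l (r • u) = r * l u := fun r u =>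
    tendsto_nhds_unique (hl (r • u))
      (by simpa [inner_smul_right] using (hl u).const_mul r)
  have lbound : ∀ u, ‖l u‖ ≤ B * ‖u‖ := by
    intro u
    rw [Real.norm_eq_abs]
    refine le_of_tendsto (hl u).abs (Eventually.of_forall fun n => ?_)
    exact (abs_real_inner_le_norm _ _).trans
      (mul_le_mul_of_nonneg_right (hB _) (norm_nonneg _))
  set L : E →L[ℝ] ℝ := LinearMap.mkContinuous
    { toFun := l, map_add' := ladd, map_smul' := fun r u => by simpa using lsmul r u }
    B lbound with hL
  refine ⟨q, (InnerProductSpace.toDual ℝ E).symm L, hq, fun u => ?_⟩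
  have hLu : ⟪(InnerProductSpace.toDual ℝ E).symm L, u⟫_ℝ = L u :=
    InnerProductSpace.toDual_symm_apply
  rw [hLu]
  exact hl u

end Aux

/-- In the Haugazeau iteration, if every weak sequential cluster point of
`(xₙ)` lies in `C`, then `xₙ → P_C x₀` strongly. -/
theorem haugazeau_iteration_strong_convergence
    {E : Type*} [NormedAddCommGroup E] [InnerProductSpace ℝ E] [CompleteSpace E]
    (C : Set E) (hCne : C.Nonempty) (hCcl : IsClosed C) (hCcv : Convex ℝ C)
    (x₀ : E) (pC : E) (hpC : pC ∈ C ∧ ∀ y ∈ C, ‖x₀ - pC‖ ≤ ‖x₀ - y‖)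
    (x xh : ℕ → E) (hx0 : x 0 = x₀)
    (hCH : ∀ n, C ⊆ haugH (x n) (xh n))
    (hproj : ∀ n, x (n + 1) ∈ haugH x₀ (x n) ∩ haugH (x n) (xh n) ∧
      ∀ y ∈ haugH x₀ (x n) ∩ haugH (x n) (xh n), ‖x₀ - x (n + 1)‖ ≤ ‖x₀ - y‖)
    (hcluster : ∀ (w : E) (q : ℕ → ℕ), StrictMono q →
      (∀ u : E, Tendsto (fun n => ⟪x (q n), u⟫_ℝ) atTop (𝓝 ⟪w, u⟫_ℝ)) → w ∈ C) :
    Tendsto x atTop (𝓝 pC) := by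
  classical
  set D : ℕ → Set E := fun n => haugH x₀ (x n) ∩ haugH (x n) (xh n) with hD
  -- invariant: C ⊆ haugH x₀ (x n)
  have hC0 : ∀ n, C ⊆ haugH x₀ (x n) := by
    intro n
    induction n with
    | zero =>
        intro c _
        simp [haugH, hx0]
    | succ n ih =>
        intro c hc
        have hcD : c ∈ D n := ⟨ih hc, hCH n hc⟩
        have hconvD : Convex ℝ (D n) := (haugH_convex _ _).inter (haugH_convex _ _)
        have hinf : ‖x₀ - x (n + 1)‖ = ⨅ w : D n, ‖x₀ - (w : E)‖ := by
          haveI : Nonempty (D n) := ⟨⟨x (n + 1), (hproj n).1⟩⟩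
          refine le_antisymm (le_ciInf fun w => (hproj n).2 w w.2) ?_
          exact ciInf_le ⟨0, by rintro r ⟨w, rfl⟩; positivity⟩
            (⟨x (n + 1), (hproj n).1⟩ : D n)
        have hvi := (norm_eq_iInf_iff_real_inner_le_zero hconvD (hproj n).1).mp hinf c hcD
        show ⟪c - x (n + 1), x₀ - x (n + 1)⟫_ℝ ≤ 0
        rwa [real_inner_comm]
  set d : ℕ → ℝ := fun n => ‖x₀ - x n‖ with hd
  have hd0 : d 0 = 0 := by simp [hd, hx0]
  have hmono : Monotone d := by
    apply monotone_nat_of_le_succ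
    intro n
    have h1 : ⟪x (n + 1) - x n, x₀ - x n⟫_ℝ ≤ 0 := (hproj n).1.1
    have h2 := haug_key x₀ (x (n + 1)) (x n) h1
    have h3 : 0 ≤ d n := norm_nonneg _
    have h4 : 0 ≤ d (n + 1) := norm_nonneg _
    nlinarith [sq_nonneg ‖x (n + 1) - x n‖]
  have hbdd : ∀ n, d n ≤ ‖x₀ - pC‖ := by
    intro n
    cases n with
    | zero => rw [hd0]; positivity
    | succ m => exact (hproj m).2 pC ⟨hC0 m hpC.1, hCH m hpC.1⟩
  have hFejer : ∀ n, ‖x n - pC‖ ^ 2 ≤ ‖x₀ - pC‖ ^ 2 - d n ^ 2 := by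
    intro n
    have h1 : ⟪pC - x n, x₀ - x n⟫_ℝ ≤ 0 := hC0 n hpC.1
    have h2 := haug_key x₀ pC (x n) h1
    have h3 : ‖x n - pC‖ = ‖pC - x n‖ := norm_sub_rev _ _
    rw [h3]
    have : d n = ‖x₀ - x n‖ := rfl
    linarith [h2]
  have hBdd : BddAbove (Set.range d) := ⟨‖x₀ - pC‖, by rintro r ⟨n, rfl⟩; exact hbdd n⟩
  have hdlim : Tendsto d atTop (𝓝 (⨆ n, d n)) := tendsto_atTop_ciSup hmono hBdd
  set dl : ℝ := ⨆ n, d n with hdl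
  have hdl_le : dl ≤ ‖x₀ - pC‖ := ciSup_le hbdd
  have hdl0 : 0 ≤ dl := le_trans (by rw [hd0]) (le_ciSup hBdd 0)
  -- bounded sequence
  have hxb : ∀ n, ‖x n‖ ≤ ‖x₀ - pC‖ + ‖x₀‖ := by
    intro n
    calc ‖x n‖ = ‖(x n - x₀) + x₀‖ := by rw [sub_add_cancel]
      _ ≤ ‖x n - x₀‖ + ‖x₀‖ := norm_add_le _ _
      _ ≤ ‖x₀ - pC‖ + ‖x₀‖ := by
          rw [norm_sub_rev]
          exact add_le_add (hbdd n) le_rfl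
  obtain ⟨q, w, hq, hwk⟩ := exists_weak_subseq x (‖x₀ - pC‖ + ‖x₀‖) hxb
  have hwC : w ∈ C := hcluster w q hq hwk
  -- ‖x₀ - w‖² ≤ dl * ‖x₀ - w‖
  have h1 : Tendsto (fun n => ⟪x₀ - x (q n), x₀ - w⟫_ℝ) atTop (𝓝 (‖x₀ - w‖ ^ 2)) := by
    have h2 : ⟪x₀, x₀ - w⟫_ℝ - ⟪w, x₀ - w⟫_ℝ = ‖x₀ - w‖ ^ 2 := by
      rw [← inner_sub_left, real_inner_self_eq_norm_sq]
    simp only [inner_sub_left]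
    rw [← h2]
    exact tendsto_const_nhds.sub (hwk (x₀ - w))
  have hdq : Tendsto (fun n => d (q n) * ‖x₀ - w‖) atTop (𝓝 (dl * ‖x₀ - w‖)) :=
    (hdlim.comp hq.tendsto_atTop).mul_const _
  have h3 : ‖x₀ - w‖ ^ 2 ≤ dl * ‖x₀ - w‖ :=
    le_of_tendsto_of_tendsto' h1 hdq fun n => by
      calc ⟪x₀ - x (q n), x₀ - w⟫_ℝ ≤ ‖x₀ - x (q n)‖ * ‖x₀ - w‖ := real_inner_le_norm _ _
        _ = d (q n) * ‖x₀ - w‖ := rfl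
  have h4 : ‖x₀ - pC‖ ≤ ‖x₀ - w‖ := hpC.2 w hwC
  have h5 : dl = ‖x₀ - pC‖ := by
    refine le_antisymm hdl_le ?_
    by_contra hcon
    push_neg at hcon
    nlinarith [h3, h4, hdl0, norm_nonneg (x₀ - w)]
  have hsq : Tendsto (fun n => ‖x₀ - pC‖ ^ 2 - d n ^ 2) atTop (𝓝 0) := by
    have h6 : Tendsto (fun n => ‖x₀ - pC‖ ^ 2 - d n ^ 2) atTop
        (𝓝 (‖x₀ - pC‖ ^ 2 - dl ^ 2)) := tendsto_const_nhds.sub (hdlim.pow 2)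
    simpa [h5] using h6
  have hnorm : Tendsto (fun n => ‖x n - pC‖) atTop (𝓝 0) := by
    have h0 : Tendsto (fun n => Real.sqrt (‖x₀ - pC‖ ^ 2 - d n ^ 2)) atTop (𝓝 0) := by
      have := (Real.continuous_sqrt.tendsto 0).comp hsq
      simpa [Function.comp_def] using this
    refine squeeze_zero (fun n => norm_nonneg _) (fun n => ?_) h0
    have hr : 0 ≤ ‖x₀ - pC‖ ^ 2 - d n ^ 2 := le_trans (sq_nonneg _) (hFejer n)
    exact (Real.le_sqrt (norm_nonneg _) hr).mpr (hFejer n)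
  rw [tendsto_iff_norm_sub_tendsto_zero]
  exact hnorm
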